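/- Let M be a nilpotent representation of Δ_n with an attractive grading on Q(M) coming from segments. Then the fixed points of the induced C*-action on Gr_e(M) are exactly the subrepresentations U with each U_i spanned by a subset of the chosen basis: U_i = span{v^{(i)}_k : k ∈ K_i} for some subsets K_i ⊆ [m_i] with |K_i| = e_i. In particular, the C*-fixed points of Gr_e(M) are in bijection with the successor closed subquivers of Q(M) with dimension vector e. -/

import Mathlib

/-- Basis of the nilpotent `Δ_n`-representation: segment `j` with positions `p < len j`. -/
abbrev SegBasis (d0 : ℕ) (len : Fin d0 → ℕ) := Σ j : Fin d0, Fin (len j)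

/-- Underlying vector space of the representation. -/
abbrev SegSpace (d0 : ℕ) (len : Fin d0 → ℕ) := SegBasis d0 len → ℂ

/-- Degree (vertex of `Δ_n`) of the basis vector `b_{j,p}`: the segment `j` starts at
vertex `st j` and position `p` lies over vertex `st j + p`. -/
noncomputable def segDeg {d0 : ℕ} {len : Fin d0 → ℕ} {n : ℕ} (st : Fin d0 → ZMod n)
    (b : SegBasis d0 len) : ZMod n :=
  st b.1 + ((b.2 : ℕ) : ZMod n)

/-- The endomorphism `A` assembled from the arrow maps: `A b_{j,p} = b_{j,p+1}`
(and `0` at the end of a segment); in coordinates `(A v) b_{j,p} = v b_{j,p-1}`. -/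
noncomputable def segShift (d0 : ℕ) (len : Fin d0 → ℕ) : SegSpace d0 len →ₗ[ℂ] SegSpace d0 len where
  toFun v b := if h : (b.2 : ℕ) = 0 then 0
    else v ⟨b.1, ⟨(b.2 : ℕ) - 1, lt_of_le_of_lt (Nat.sub_le _ _) b.2.isLt⟩⟩
  map_add' u v := by funext b; by_cases h : (b.2 : ℕ) = 0 <;> simp [h]
  map_smul' c v := by funext b; by_cases h : (b.2 : ℕ) = 0 <;> simp [h]

/-- Graded piece `M_i`: the span of the `b_{j,p}` of degree `i`. -/
noncomputable def gradedPiece {d0 : ℕ} {len : Fin d0 → ℕ} {n : ℕ} (st : Fin d0 → ZMod n) (i : ZMod n) :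
    Submodule ℂ (SegSpace d0 len) :=
  Submodule.span ℂ {v | ∃ b : SegBasis d0 len, segDeg st b = i ∧ v = Pi.single b 1}

/-- The action of `γ = (γ₀, γ₁, …, γ_{d₀}) ∈ T = (ℂ*)^{d₀+1}`:
`γ · b_{j,p} = γ₀^p γ_j b_{j,p}`. -/
noncomputable def torusOp {d0 : ℕ} {len : Fin d0 → ℕ} (γ0 : ℂˣ) (γ : Fin d0 → ℂˣ) :
    SegSpace d0 len →ₗ[ℂ] SegSpace d0 len where
  toFun v b := (γ0 : ℂ) ^ (b.2 : ℕ) * (γ b.1 : ℂ) * v b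
  map_add' u v := by funext b; simp [mul_add]
  map_smul' c v := by funext b; simp; ring

/-- The `ℂ*`-action attached to a grading `wt` of the coefficient quiver:
`z · b = z^{wt b} b`. -/
noncomputable def zAct {d0 : ℕ} {len : Fin d0 → ℕ} (wt : SegBasis d0 len → ℤ) (z : ℂˣ) :
    SegSpace d0 len →ₗ[ℂ] SegSpace d0 len where
  toFun v b := ((z ^ wt b : ℂˣ) : ℂ) * v b
  map_add' u v := by funext b; simp [mul_add]
  map_smul' c v := by funext b; simp; ring

/-- `U` is a subrepresentation of the `Δ_n`-representation `M`: a family of graded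
subspaces `U i ≤ M_i` with `A (U i) ≤ U (i+1)`. -/
noncomputable def IsSubrep {d0 : ℕ} {len : Fin d0 → ℕ} {n : ℕ} (st : Fin d0 → ZMod n)
    (U : ZMod n → Submodule ℂ (SegSpace d0 len)) : Prop :=
  (∀ i, U i ≤ gradedPiece st i) ∧ ∀ i, (U i).map (segShift d0 len) ≤ U (i + 1)

/-- Membership in the quiver Grassmannian `Gr_e(M)`. -/
noncomputable def InGrass {d0 : ℕ} {len : Fin d0 → ℕ} {n : ℕ} (st : Fin d0 → ZMod n) (e : ZMod n → ℕ)
    (U : ZMod n → Submodule ℂ (SegSpace d0 len)) : Prop :=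
  IsSubrep st U ∧ ∀ i, Module.finrank ℂ (U i) = e i

lemma graded_support {d0 n : ℕ} {len : Fin d0 → ℕ} (st : Fin d0 → ZMod n) (i : ZMod n)
    {v : SegSpace d0 len} (hv : v ∈ gradedPiece st i) :
    ∀ b, segDeg st b ≠ i → v b = 0 := by
  classical
  induction hv using Submodule.span_induction with
  | mem x hx => obtain ⟨b, hb, rfl⟩ := hx
                intro b' hb'
                have : b' ≠ b := fun h => hb' (h ▸ hb)
                simp [Pi.single_apply, this]
  | zero => intro b _; rfl
  | add x y _ _ hx hy => intro b hb; simp [hx b hb, hy b hb]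
  | smul c x _ hx => intro b hb; simp [hx b hb]

lemma two_zpow_inj : Function.Injective fun m : ℤ => (2:ℂ) ^ m := by
  intro a b h
  simp only [] at h
  have h2 : ‖(2:ℂ)^a‖ = ‖(2:ℂ)^b‖ := by rw [h]
  rw [norm_zpow, norm_zpow] at h2
  simp only [Complex.norm_ofNat] at h2
  exact zpow_right_injective₀ (by norm_num) (by norm_num) h2

lemma single_mem_of_invariant {d0 n : ℕ} {len : Fin d0 → ℕ} (st : Fin d0 → ZMod n) (i : ZMod n)
    (wt : SegBasis d0 len → ℤ)
    (hAG1 : ∀ b b' : SegBasis d0 len, segDeg st b = segDeg st b' → wt b = wt b' → b = b')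
    (W : Submodule ℂ (SegSpace d0 len)) (hWg : W ≤ gradedPiece st i)
    (hfix : ∀ z : ℂˣ, W.map (zAct wt z) = W) :
    ∀ v ∈ W, ∀ b, Pi.single b (v b) ∈ W := by
  classical
  suffices H : ∀ N : ℕ, ∀ v ∈ W,
      (Finset.univ.filter (fun b => v b ≠ 0)).card ≤ N → ∀ b, Pi.single b (v b) ∈ W by
    intro v hv b; exact H _ v hv le_rfl b
  intro N
  induction N with
  | zero =>
    intro v hv hcard b
    have hb : v b = 0 := by
      by_contra h
      have : b ∈ Finset.univ.filter (fun b => v b ≠ 0) := by simp [h]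
      have := Finset.card_pos.mpr ⟨b, this⟩
      omega
    rw [hb]; simpa using W.zero_mem
  | succ N ih =>
    intro v hv hcard b
    by_cases hb : v b = 0
    · rw [hb]; simpa using W.zero_mem
    · -- b is in the support
      set u : ℂˣ := Units.mk0 (2:ℂ) (by norm_num) with hu
      have huv : (u : ℂ) = 2 := rfl
      set v' : SegSpace d0 len := zAct wt u v - ((2:ℂ) ^ wt b) • v with hv'
      have hv'W : v' ∈ W := by
        apply W.sub_mem _ (W.smul_mem _ hv)
        rw [← hfix u]; exact ⟨v, hv, rfl⟩
      have hval : ∀ b', v' b' = ((2:ℂ) ^ wt b' - (2:ℂ) ^ wt b) * v b' := by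
        intro b'
        simp only [hv', Pi.sub_apply, Pi.smul_apply, smul_eq_mul, zAct,
          LinearMap.coe_mk, AddHom.coe_mk]
        rw [Units.val_zpow_eq_zpow_val, huv]
        ring
      have hsupp : Finset.univ.filter (fun b' => v' b' ≠ 0) ⊆
          (Finset.univ.filter (fun b' => v b' ≠ 0)).erase b := by
        intro b' hb'
        simp only [Finset.mem_filter, Finset.mem_univ, true_and] at hb'
        rw [Finset.mem_erase, Finset.mem_filter]
        refine ⟨?_, Finset.mem_univ _, fun h => hb' (by rw [hval, h, mul_zero])⟩
        rintro rfl
        exact hb' (by rw [hval]; ring)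
      have hbmem : b ∈ Finset.univ.filter (fun b' => v b' ≠ 0) := by simp [hb]
      have hcard' : (Finset.univ.filter (fun b' => v' b' ≠ 0)).card ≤ N := by
        have h1 := Finset.card_le_card hsupp
        have h2 := Finset.card_erase_of_mem hbmem
        omega
      have ih' := ih v' hv'W hcard'
      -- each single component of v at b' ≠ b in support is in W
      have hdeg : ∀ b', v b' ≠ 0 → segDeg st b' = i := by
        intro b' h
        by_contra hc
        exact h (graded_support st i (hWg hv) b' hc)
      have hsingle : ∀ b', b' ≠ b → Pi.single b' (v b') ∈ W := by
        intro b' hne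
        by_cases h0 : v b' = 0
        · rw [h0]; simpa using W.zero_mem
        · have hwne : wt b' ≠ wt b :=
            fun h => hne (hAG1 b' b (by rw [hdeg b' h0, hdeg b hb]) h)
          have hcne : (2:ℂ) ^ wt b' - (2:ℂ) ^ wt b ≠ 0 := by
            intro h
            exact hwne (two_zpow_inj (by simpa [sub_eq_zero] using h))
          have heq : (Pi.single b' (v b') : SegSpace d0 len) =
              ((2:ℂ) ^ wt b' - (2:ℂ) ^ wt b)⁻¹ • (Pi.single b' (v' b') : SegSpace d0 len) := by
            funext x
            rcases eq_or_ne x b' with rfl | hx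
            · simp only [Pi.single_eq_same, Pi.smul_apply, smul_eq_mul, hval]
              rw [← mul_assoc, inv_mul_cancel₀ hcne, one_mul]
            · simp [Pi.single_eq_of_ne hx]
          rw [heq]
          exact W.smul_mem _ (ih' b')
      -- now assemble
      have h1 : (Pi.single b (v b) : SegSpace d0 len) +
          ∑ b' ∈ Finset.univ.erase b, Pi.single b' (v b') = v := by
        rw [Finset.add_sum_erase _ (fun b' => (Pi.single b' (v b') : SegSpace d0 len))
          (Finset.mem_univ b)]
        exact Finset.univ_sum_single v
      have hsum : (Pi.single b (v b) : SegSpace d0 len) =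
          v - ∑ b' ∈ Finset.univ.erase b, Pi.single b' (v b') := eq_sub_of_add_eq h1
      rw [hsum]
      exact W.sub_mem hv (Submodule.sum_mem W (fun b' hb' =>
        hsingle b' (Finset.ne_of_mem_erase hb')))

lemma segBasis_ext_iff {d0 : ℕ} {len : Fin d0 → ℕ} {x y : SegBasis d0 len} :
    x = y ↔ x.1 = y.1 ∧ (x.2 : ℕ) = (y.2 : ℕ) := by
  constructor
  · rintro rfl; exact ⟨rfl, rfl⟩
  · obtain ⟨jx, px⟩ := x
    obtain ⟨jy, py⟩ := y
    rintro ⟨h1, h2⟩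
    dsimp at h1 h2
    subst h1
    rw [Fin.ext h2]

lemma segShift_single {d0 : ℕ} {len : Fin d0 → ℕ} (j : Fin d0) (p : Fin (len j))
    (h : (p : ℕ) + 1 < len j) :
    segShift d0 len (Pi.single (⟨j, p⟩ : SegBasis d0 len) 1) =
      Pi.single (⟨j, ⟨(p : ℕ) + 1, h⟩⟩ : SegBasis d0 len) 1 := by
  classical
  funext b'
  obtain ⟨j', p'⟩ := b'
  show (if h0 : (p' : ℕ) = 0 then 0
    else Pi.single (⟨j, p⟩ : SegBasis d0 len) 1
      ⟨j', ⟨(p' : ℕ) - 1, lt_of_le_of_lt (Nat.sub_le _ _) p'.isLt⟩⟩) = _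
  by_cases h0 : (p' : ℕ) = 0
  · rw [dif_pos h0, Pi.single_apply, if_neg]
    rw [segBasis_ext_iff]
    push_neg
    intro _
    simp only
    omega
  · rw [dif_neg h0, Pi.single_apply, Pi.single_apply]
    have hiff : ((⟨j', ⟨(p' : ℕ) - 1, lt_of_le_of_lt (Nat.sub_le _ _) p'.isLt⟩⟩ :
        SegBasis d0 len) = ⟨j, p⟩) ↔
        ((⟨j', p'⟩ : SegBasis d0 len) = ⟨j, ⟨(p : ℕ) + 1, h⟩⟩) := by
      rw [segBasis_ext_iff, segBasis_ext_iff]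
      simp only
      constructor
      · rintro ⟨h1, h2⟩; exact ⟨h1, by omega⟩
      · rintro ⟨h1, h2⟩; exact ⟨h1, by omega⟩
    rw [if_congr hiff rfl rfl]

lemma segDeg_succ {d0 : ℕ} {len : Fin d0 → ℕ} {n : ℕ} (st : Fin d0 → ZMod n)
    (j : Fin d0) (p : Fin (len j)) (h : (p : ℕ) + 1 < len j) :
    segDeg st (⟨j, ⟨(p : ℕ) + 1, h⟩⟩ : SegBasis d0 len) =
      segDeg st (⟨j, p⟩ : SegBasis d0 len) + 1 := by
  simp only [segDeg]
  push_cast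
  ring

lemma zAct_single {d0 : ℕ} {len : Fin d0 → ℕ} (wt : SegBasis d0 len → ℤ) (z : ℂˣ)
    (b : SegBasis d0 len) :
    zAct wt z (Pi.single b 1) = ((z ^ wt b : ℂˣ) : ℂ) • (Pi.single b 1 : SegSpace d0 len) := by
  classical
  funext x
  simp only [zAct, LinearMap.coe_mk, AddHom.coe_mk, Pi.smul_apply, smul_eq_mul,
    Pi.single_apply]
  rcases eq_or_ne x b with rfl | hx
  · simp
  · simp [hx]

lemma single_injective {d0 : ℕ} {len : Fin d0 → ℕ} :
    Function.Injective (fun b : SegBasis d0 len => (Pi.single b (1:ℂ) : SegSpace d0 len)) := by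
  classical
  intro a b h
  by_contra hne
  have := congrFun h a
  simp only [Pi.single_eq_same, Pi.single_apply, if_neg (fun hh : a = b => hne hh)] at this
  exact one_ne_zero this

lemma finrank_span_single_image {d0 : ℕ} {len : Fin d0 → ℕ} (T : Set (SegBasis d0 len)) :
    Module.finrank ℂ (Submodule.span ℂ
      ((fun b => (Pi.single b (1:ℂ) : SegSpace d0 len)) '' T)) = T.ncard := by
  classical
  set s : Set (SegSpace d0 len) := (fun b => (Pi.single b (1:ℂ) : SegSpace d0 len)) '' T
  haveI : Fintype s := (Set.toFinite s).fintype
  have hs : s ⊆ Set.range (Pi.basisFun ℂ (SegBasis d0 len)) := by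
    rintro _ ⟨b, _, rfl⟩
    exact ⟨b, by simp⟩
  have hli : LinearIndependent ℂ ((↑) : s → SegSpace d0 len) :=
    ((Pi.basisFun ℂ (SegBasis d0 len)).linearIndependent.linearIndepOn_id).mono hs
  rw [finrank_span_set_eq_card hli, ← Set.ncard_eq_toFinset_card' s,
    Set.ncard_image_of_injective T single_injective]

lemma single_eq_smul_one {d0 : ℕ} {len : Fin d0 → ℕ} (b : SegBasis d0 len) (c : ℂ) :
    (Pi.single b c : SegSpace d0 len) = c • (Pi.single b 1 : SegSpace d0 len) := by
  classical
  funext x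
  rcases eq_or_ne x b with rfl | hx
  · simp
  · simp [Pi.single_apply, hx]

/-- Let `M` be a nilpotent representation of `Δ_n` with an attractive
grading `wt` on its coefficient quiver `Q(M)`, and let `ℂ*` act on `Gr_e(M)` by
`z · b = z^{wt b} b`.  A point `U ∈ Gr_e(M)` is fixed by the `ℂ*`-action if and only if
each `U i` is spanned by a subset of the chosen basis; more precisely, if and only if
there is a successor closed subquiver `S` of `Q(M)` with dimension vector `e`
(`S` is a set of basis vectors closed under the shift, with `e i` elements of each
degree `i`) such that `U i` is the span of the coordinate vectors of the elements of
`S` of degree `i`. -/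
theorem zAct_fixed_points
    (d0 n : ℕ) (len : Fin d0 → ℕ) (st : Fin d0 → ZMod n) (e : ZMod n → ℕ)
    (wt : SegBasis d0 len → ℤ)
    (hAG1 : ∀ b b' : SegBasis d0 len, segDeg st b = segDeg st b' →
      wt b = wt b' → b = b')
    (hAG2 : ∃ d : ZMod n → ℤ, ∀ (j : Fin d0) (p : Fin (len j))
      (h : (p : ℕ) + 1 < len j),
      wt ⟨j, ⟨(p : ℕ) + 1, h⟩⟩ = wt ⟨j, p⟩ + d (segDeg st ⟨j, p⟩))
    (U : ZMod n → Submodule ℂ (SegSpace d0 len)) (hU : InGrass st e U) :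
    (∀ z : ℂˣ, ∀ i, (U i).map (zAct wt z) = U i) ↔
    ∃ S : Set (SegBasis d0 len),
      (∀ b ∈ S, ∀ h : (b.2 : ℕ) + 1 < len b.1,
        (⟨b.1, ⟨(b.2 : ℕ) + 1, h⟩⟩ : SegBasis d0 len) ∈ S) ∧
      (∀ i, {b ∈ S | segDeg st b = i}.ncard = e i) ∧
      (∀ i, U i = Submodule.span ℂ
        ((fun b => Pi.single b (1 : ℂ)) '' {b ∈ S | segDeg st b = i})) := by
  classical
  obtain ⟨⟨hUg, hUsh⟩, hUrk⟩ := hU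
  constructor
  · intro hfix
    set S : Set (SegBasis d0 len) := {b | Pi.single b (1:ℂ) ∈ U (segDeg st b)} with hS
    have hspan : ∀ i, U i = Submodule.span ℂ
        ((fun b => Pi.single b (1 : ℂ)) '' {b ∈ S | segDeg st b = i}) := by
      intro i
      apply le_antisymm
      · intro v hv
        have key := single_mem_of_invariant st i wt hAG1 (U i) (hUg i)
          (fun z => hfix z i) v hv
        rw [← Finset.univ_sum_single v]
        apply Submodule.sum_mem
        intro b _
        by_cases h0 : v b = 0
        · rw [h0, single_eq_smul_one, zero_smul]
          exact Submodule.zero_mem _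
        · have hdeg : segDeg st b = i := by
            by_contra hc; exact h0 (graded_support st i (hUg i hv) b hc)
          have h1 : Pi.single b (1:ℂ) ∈ U i := by
            have h2 := (U i).smul_mem (v b)⁻¹ (key b)
            rwa [single_eq_smul_one b (v b), smul_smul, inv_mul_cancel₀ h0,
              one_smul] at h2
          have hbS : b ∈ S := by rw [hS]; simpa [hdeg] using h1
          rw [single_eq_smul_one b (v b)]
          exact Submodule.smul_mem _ _ (Submodule.subset_span ⟨b, ⟨hbS, hdeg⟩, rfl⟩)
      · rw [Submodule.span_le]
        rintro _ ⟨b, ⟨hbS, hbdeg⟩, rfl⟩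
        have : Pi.single b (1:ℂ) ∈ U (segDeg st b) := hbS
        rwa [hbdeg] at this
    refine ⟨S, ?_, ?_, hspan⟩
    · rintro ⟨j, p⟩ hb h
      have h1 : Pi.single (⟨j, p⟩ : SegBasis d0 len) (1:ℂ) ∈ U (segDeg st ⟨j, p⟩) := hb
      have h2 := hUsh (segDeg st ⟨j, p⟩) ⟨_, h1, rfl⟩
      rw [segShift_single j p h] at h2
      show Pi.single (⟨j, ⟨(p : ℕ) + 1, h⟩⟩ : SegBasis d0 len) (1:ℂ) ∈
        U (segDeg st ⟨j, ⟨(p : ℕ) + 1, h⟩⟩)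
      rw [segDeg_succ st j p h]
      exact h2
    · intro i
      rw [← hUrk i, hspan i, finrank_span_single_image]
  · rintro ⟨S, hSc, hScard, hspan⟩ z i
    rw [hspan i, Submodule.map_span]
    apply le_antisymm
    · rw [Submodule.span_le]
      rintro _ ⟨_, ⟨b, hb, rfl⟩, rfl⟩
      rw [zAct_single]
      exact Submodule.smul_mem _ _ (Submodule.subset_span ⟨b, hb, rfl⟩)
    · rw [Submodule.span_le]
      rintro _ ⟨b, hb, rfl⟩
      have heq : (Pi.single b (1:ℂ) : SegSpace d0 len) =
          ((z ^ wt b : ℂˣ) : ℂ)⁻¹ • zAct wt z (Pi.single b 1) := by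
        rw [zAct_single, smul_smul, inv_mul_cancel₀ (Units.ne_zero _), one_smul]
      show (Pi.single b (1:ℂ) : SegSpace d0 len) ∈ _
      rw [heq]
      exact Submodule.smul_mem _ _
        (Submodule.subset_span ⟨_, ⟨b, hb, rfl⟩, rfl⟩)
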